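/- Consider the generalized quitting game with player 1's non-quitting actions {T,B} (no quitting actions), player 2's quitting action L* and non-quitting action R, and scalar payoffs g(T,L*) = 1, g(T,R) = 0, g(B,L*) = 0, g(B,R) = −1. The set C = {0} ⊆ ℝ satisfies Condition (3): max_{y∈Δ(J)} sup_{β∈𝓜(J)} min_{x∈Δ(I)} inf_{α∈𝓜(I)} d_C(φ(x,α,y,β)) = 0. In fact, for every y ∈ Δ({L*,R}) and β ∈ 𝓜({L*,R}), taking x = ( y_R/(1+β_{L*}) , (y_{L*}+β_{L*})/(1+β_{L*}) ) ∈ Δ({T,B}) and α = 0 gives g(x,y) + g*(α,y) + g*(x,β) = 0. -/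

import Mathlib

noncomputable section

namespace Example6

/-- Payoffs: `true` = `T`, `false` = `B` for player 1 (both non-quitting);
`true` = `L*` (quitting), `false` = `R` (non-quitting) for player 2.
`g(T,L*) = 1, g(T,R) = 0, g(B,L*) = 0, g(B,R) = −1`. -/
def g : Bool → Bool → ℝ := fun i j =>
  if i then (if j then 1 else 0) else (if j then 0 else -1)

/-- Bilinear extension of `g`. -/
def mix (x y : Bool → ℝ) : ℝ := ∑ i : Bool, ∑ j : Bool, x i * y j * g i j

/-- Measure of absorption `p*`: a pair `(i,j)` is absorbing iff `j = L*`. -/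
def pstar (α β : Bool → ℝ) : ℝ := ∑ i : Bool, ∑ j : Bool, if j then α i * β j else 0

/-- Expected absorption payoff `g*`. -/
def gstar (α β : Bool → ℝ) : ℝ := ∑ i : Bool, ∑ j : Bool, if j then α i * β j * g i j else 0

/-- `φ(x,α,y,β) = (g(x,y) + g*(α,y) + g*(x,β)) / (1 + p*(α,y) + p*(x,β))`. -/
def phi (x α y β : Bool → ℝ) : ℝ :=
  (1 + pstar α y + pstar x β)⁻¹ * (mix x y + gstar α y + gstar x β)

/-- The quantity of Condition (3): `max_y sup_β min_x inf_α d_C(φ(x,α,y,β))`. -/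
def cond3Val (C : Set ℝ) : ℝ :=
  ⨆ y : stdSimplex ℝ Bool, ⨆ β : {b : Bool → ℝ // ∀ j, 0 ≤ b j},
    ⨅ x : stdSimplex ℝ Bool, ⨅ α : {a : Bool → ℝ // ∀ i, 0 ≤ a i},
      Metric.infDist (phi x.1 α.1 y.1 β.1) C

/-- The witness `x = (y_R/(1+β_{L*}), (y_{L*}+β_{L*})/(1+β_{L*}))`: `x true` is the
probability of `T` and `x false` that of `B`; `y false = y_R`, `y true = y_{L*}`,
`β true = β_{L*}`. -/
def xWitness (y β : Bool → ℝ) : Bool → ℝ := fun i =>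
  if i then y false / (1 + β true) else (y true + β true) / (1 + β true)


lemma key (y : Bool → ℝ) (hy : y ∈ stdSimplex ℝ Bool) (β : Bool → ℝ) (hβ : ∀ j, 0 ≤ β j) :
    xWitness y β ∈ stdSimplex ℝ Bool ∧
    mix (xWitness y β) y + gstar (fun _ => (0:ℝ)) y + gstar (xWitness y β) β = 0 := by
  obtain ⟨hy0, hy1⟩ := hy
  have hsum : y false + y true = 1 := by
    have := hy1; simpa [Fintype.sum_bool, add_comm] using this
  have hpos : (0:ℝ) < 1 + β true := by linarith [hβ true]
  have hne : (1 + β true) ≠ 0 := ne_of_gt hpos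
  constructor
  · constructor
    · intro i
      cases i
      · simpa [xWitness] using div_nonneg (add_nonneg (hy0 true) (hβ true)) hpos.le
      · simpa [xWitness] using div_nonneg (hy0 false) hpos.le
    · simp only [Fintype.sum_bool, xWitness, ↓reduceIte, Bool.false_eq_true]
      field_simp
      linarith
  · simp only [mix, gstar, xWitness, g, Fintype.sum_bool, ↓reduceIte, Bool.false_eq_true]
    field_simp
    ring

set_option maxHeartbeats 1000000 in
lemma phi_zero (y : Bool → ℝ) (hy : y ∈ stdSimplex ℝ Bool) (β : Bool → ℝ) (hβ : ∀ j, 0 ≤ β j) :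
    phi (xWitness y β) (fun _ => (0:ℝ)) y β = 0 := by
  have h := (key y hy β hβ).2
  simp [phi, h]

set_option maxHeartbeats 1000000 in
/-- in this game, the set `C = {0} ⊆ ℝ` satisfies Condition (3); in fact,
for every `y ∈ Δ(J)` and `β ∈ 𝓜(J)`, taking `x = (y_R/(1+β_{L*}), (y_{L*}+β_{L*})/(1+β_{L*}))`
(which lies in `Δ({T,B})`) and `α = 0` gives `g(x,y) + g*(α,y) + g*(x,β) = 0`. -/
theorem cond3_holds_for_zero :
    cond3Val ({0} : Set ℝ) = 0 ∧
    ∀ y ∈ stdSimplex ℝ Bool, ∀ β : Bool → ℝ, (∀ j, 0 ≤ β j) →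
      xWitness y β ∈ stdSimplex ℝ Bool ∧
      mix (xWitness y β) y + gstar (fun _ => (0:ℝ)) y + gstar (xWitness y β) β = 0 := by
  haveI hS : Nonempty (stdSimplex ℝ Bool) := by
    refine ⟨⟨fun i => if i then 1 else 0, ?_, ?_⟩⟩
    · intro i; cases i <;> norm_num
    · simp [Fintype.sum_bool]
  haveI hM : Nonempty {a : Bool → ℝ // ∀ i, 0 ≤ a i} := ⟨⟨fun _ => 0, fun _ => le_refl 0⟩⟩
  have main : ∀ y ∈ stdSimplex ℝ Bool, ∀ β : Bool → ℝ, (∀ j, 0 ≤ β j) →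
      xWitness y β ∈ stdSimplex ℝ Bool ∧
      mix (xWitness y β) y + gstar (fun _ => (0:ℝ)) y + gstar (xWitness y β) β = 0 :=
    fun y hy β hβ => key y hy β hβ
  refine ⟨?_, main⟩
  have hinner : ∀ (y : stdSimplex ℝ Bool) (β : {b : Bool → ℝ // ∀ j, 0 ≤ b j}),
      (⨅ x : stdSimplex ℝ Bool, ⨅ α : {a : Bool → ℝ // ∀ i, 0 ≤ a i},
        Metric.infDist (phi x.1 α.1 y.1 β.1) ({0} : Set ℝ)) = 0 := by
    intro y β
    apply le_antisymm
    · have hx : xWitness y.1 β.1 ∈ stdSimplex ℝ Bool := (key y.1 y.2 β.1 β.2).1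
      have hbdd : ∀ x : stdSimplex ℝ Bool, BddBelow (Set.range
          (fun α : {a : Bool → ℝ // ∀ i, 0 ≤ a i} =>
            Metric.infDist (phi x.1 α.1 y.1 β.1) ({0} : Set ℝ))) :=
        fun x => ⟨0, by rintro _ ⟨α, rfl⟩; exact Metric.infDist_nonneg⟩
      calc (⨅ x : stdSimplex ℝ Bool, ⨅ α : {a : Bool → ℝ // ∀ i, 0 ≤ a i},
            Metric.infDist (phi x.1 α.1 y.1 β.1) ({0} : Set ℝ))
          ≤ ⨅ α : {a : Bool → ℝ // ∀ i, 0 ≤ a i},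
            Metric.infDist (phi (xWitness y.1 β.1) α.1 y.1 β.1) ({0} : Set ℝ) := by
            apply ciInf_le (f := fun x : stdSimplex ℝ Bool =>
              ⨅ α : {a : Bool → ℝ // ∀ i, 0 ≤ a i},
                Metric.infDist (phi x.1 α.1 y.1 β.1) ({0} : Set ℝ)) (c := ⟨_, hx⟩)
            refine ⟨0, ?_⟩
            rintro _ ⟨x, rfl⟩
            exact le_ciInf fun α => Metric.infDist_nonneg
        _ ≤ Metric.infDist (phi (xWitness y.1 β.1) (fun _ => (0:ℝ)) y.1 β.1) ({0} : Set ℝ) :=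
            ciInf_le (hbdd ⟨xWitness y.1 β.1, hx⟩) ⟨fun _ => (0:ℝ), fun _ => le_refl 0⟩
        _ = 0 := by rw [phi_zero y.1 y.2 β.1 β.2]; simp
    · exact le_ciInf fun x => le_ciInf fun α => Metric.infDist_nonneg
  have h0 : ∀ y : stdSimplex ℝ Bool,
      (⨆ β : {b : Bool → ℝ // ∀ j, 0 ≤ b j},
        ⨅ x : stdSimplex ℝ Bool, ⨅ α : {a : Bool → ℝ // ∀ i, 0 ≤ a i},
          Metric.infDist (phi x.1 α.1 y.1 β.1) ({0} : Set ℝ)) = 0 := by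
    intro y
    haveI : Nonempty {b : Bool → ℝ // ∀ j, 0 ≤ b j} := ⟨⟨fun _ => 0, fun _ => le_refl 0⟩⟩
    simp only [hinner]
    exact ciSup_const
  unfold cond3Val
  have hne : Nonempty (stdSimplex ℝ Bool) := by
    refine ⟨⟨fun _ => (1:ℝ)/2, fun _ => by norm_num, ?_⟩⟩
    norm_num [Fintype.sum_bool]
  simp only [h0]
  exact ciSup_const


end Example6

end
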